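/- Let k ≥ 1 be an integer and let α_1,…,α_m be real numbers with 0 ≤ α_i ≤ 2π/k for each i and ∑_{i=1}^m α_i ≥ 2π/k. Then ∑_{i=1}^m 2·sin(α_i/2) ≥ 2·sin(π/k). -/

import Mathlib

open MeasureTheory Set Real Function

noncomputable section

/-- `r` is an arc-length parameterization of a closed curve of length 1 in `ℝ^d`. -/
def IsUnitClosedCurve (d : ℕ) (r : ℝ → EuclideanSpace ℝ (Fin d)) : Prop :=
  Continuous r ∧ Periodic r 1 ∧ LipschitzWith 1 r ∧
    eVariationOn r (Icc (0:ℝ) 1) = 1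

/-- The length of a shortest closed curve covering `S`. -/
def w {d : ℕ} (S : Set (EuclideanSpace ℝ (Fin d))) : ENNReal :=
  ⨅ (γ : {γ : ℝ → EuclideanSpace ℝ (Fin d) //
      Continuous γ ∧ Periodic γ 1 ∧ S ⊆ γ '' Icc (0:ℝ) 1}),
    eVariationOn γ.1 (Icc (0:ℝ) 1)

/-- A partition of `[0,1)` into `k` measurable sets of measure `1/k` each. -/
def IsEqualPartition (k : ℕ) (A : Fin k → Set ℝ) : Prop :=
  (∀ i, MeasurableSet (A i)) ∧ Pairwise (onFun Disjoint A) ∧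
    (⋃ i, A i) = Ico (0:ℝ) 1 ∧ ∀ i, volume (A i) = ENNReal.ofReal (1 / k)

def betaCurve (d k : ℕ) (r : ℝ → EuclideanSpace ℝ (Fin d)) : ENNReal :=
  ⨅ (A : {A : Fin k → Set ℝ // IsEqualPartition k A}),
    (k : ENNReal)⁻¹ * ∑ i, w (r '' A.1 i)

def betaSup (d k : ℕ) : ENNReal :=
  ⨆ (r : {r : ℝ → EuclideanSpace ℝ (Fin d) // IsUnitClosedCurve d r}),
    betaCurve d k r.1

/-- A partition of `C` into `k` nonempty sets. -/
def IsPartitionInto {α : Type*} (k : ℕ) (S : Fin k → Set α) (C : Set α) : Prop :=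
  (∀ i, (S i).Nonempty) ∧ Pairwise (onFun Disjoint S) ∧ (⋃ i, S i) = C

def gammaCurve {d : ℕ} (k : ℕ) (C : Set (EuclideanSpace ℝ (Fin d))) : ENNReal :=
  ⨅ (S : {S : Fin k → Set (EuclideanSpace ℝ (Fin d)) // IsPartitionInto k S C}),
    ⨆ i, w (S.1 i)

def gammaSup (d k : ℕ) : ENNReal :=
  ⨆ (r : {r : ℝ → EuclideanSpace ℝ (Fin d) // IsUnitClosedCurve d r}),
    gammaCurve k (r.1 '' Icc (0:ℝ) 1)

def circlePt (t : ℝ) : EuclideanSpace ℝ (Fin 2) :=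
  (EuclideanSpace.equiv (Fin 2) ℝ).symm ![Real.cos t, Real.sin t]

lemma sin_chord_aux {c x : ℝ} (hc0 : 0 < c) (hcπ : c ≤ π) (hx0 : 0 ≤ x)
    (hxc : x ≤ c) : (x / c) * Real.sin c ≤ Real.sin x := by
  have hconc := strictConcaveOn_sin_Icc.concaveOn
  have h0mem : (0:ℝ) ∈ Icc (0:ℝ) π := ⟨le_refl _, Real.pi_pos.le⟩
  have hcmem : c ∈ Icc (0:ℝ) π := ⟨hc0.le, hcπ⟩
  have ha : 0 ≤ 1 - x / c := by
    have : x / c ≤ 1 := (div_le_one hc0).mpr hxc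
    linarith
  have hb : 0 ≤ x / c := div_nonneg hx0 hc0.le
  have := hconc.2 h0mem hcmem ha hb (by ring)
  have hxeq : (1 - x / c) • (0:ℝ) + (x / c) • c = x := by
    field_simp
    simp [smul_eq_mul, hc0.ne']
  rw [hxeq] at this
  simpa [Real.sin_zero, smul_eq_mul] using this

theorem sum_sin_half_ge (k m : ℕ) (hk : 1 ≤ k) (α : Fin m → ℝ)
    (h0 : ∀ i, 0 ≤ α i) (h1 : ∀ i, α i ≤ 2 * π / k)
    (hsum : 2 * π / k ≤ ∑ i, α i) :
    2 * Real.sin (π / k) ≤ ∑ i, 2 * Real.sin (α i / 2) := by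
  have hkpos : (0:ℝ) < k := by exact_mod_cast hk
  have hk1 : (1:ℝ) ≤ k := by exact_mod_cast hk
  have hπ := Real.pi_pos
  have hc0 : (0:ℝ) < π / k := div_pos hπ hkpos
  have hcπ : π / k ≤ π := by
    rw [div_le_iff₀ hkpos]; nlinarith
  have hsin0 : 0 ≤ Real.sin (π / k) := Real.sin_nonneg_of_nonneg_of_le_pi hc0.le hcπ
  have key : ∀ i, α i * (↑k / π) * Real.sin (π / k) ≤ 2 * Real.sin (α i / 2) := by
    intro i
    have hle : α i / 2 ≤ π / k := by
      have := h1 i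
      rw [mul_div_assoc] at this
      linarith
    have h := sin_chord_aux hc0 hcπ (by linarith [h0 i]) hle
    have heq : α i / 2 / (π / ↑k) * Real.sin (π / ↑k) * 2
        = α i * (↑k / π) * Real.sin (π / k) := by
      field_simp
    nlinarith [h]
  calc 2 * Real.sin (π / k)
      = (2 * π / k) * (↑k / π) * Real.sin (π / k) := by
        field_simp
    _ ≤ (∑ i, α i) * (↑k / π) * Real.sin (π / k) := by
        apply mul_le_mul_of_nonneg_right _ hsin0
        exact mul_le_mul_of_nonneg_right hsum (by positivity)
    _ = ∑ i, α i * (↑k / π) * Real.sin (π / k) := by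
        rw [← Finset.sum_mul, ← Finset.sum_mul]
    _ ≤ ∑ i, 2 * Real.sin (α i / 2) := Finset.sum_le_sum fun i _ => key i

end
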